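/- The square of W_a has entries (W_a²)_{g,h} = ∏_{i=1}^n m_i·(δ_{g_i,0}·δ_{h_i,0} + (1 - δ_{g_i,0})·(1 - δ_{h_i,0})·(m_i·δ_{g_i,h_i} - 1)). -/
import Mathlib

def wronOmega {m : ℕ} [NeZero m] (x y : Fin m) : ℤ :=
  if x ≠ 0 ∧ x = y then 1 else 0

def kdel {m : ℕ} (x y : Fin m) : ℤ := if x = y then 1 else 0

def Wa {n : ℕ} (m : Fin n → ℕ) [∀ i, NeZero (m i)] :
    Matrix (∀ i, Fin (m i)) (∀ i, Fin (m i)) ℤ :=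
  fun g h => ∏ i, (1 - (m i : ℤ) * wronOmega (g i) (h i))

lemma key (M : ℕ) [NeZero M] (a b : Fin M) :
    ∑ x : Fin M, (1 - (M:ℤ) * wronOmega a x) * (1 - (M:ℤ) * wronOmega x b)
      = (M:ℤ) * (kdel a 0 * kdel b 0 +
        (1 - kdel a 0) * (1 - kdel b 0) * ((M:ℤ) * kdel a b - 1)) := by
  have S1 : ∑ x : Fin M, wronOmega a x = if a = 0 then 0 else 1 := by
    simp [wronOmega, ite_and, Finset.sum_ite_eq]
  have S2 : ∑ x : Fin M, wronOmega x b = if b = 0 then 0 else 1 := by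
    simp only [wronOmega]
    rw [Finset.sum_congr rfl (fun x _ => show (if x ≠ 0 ∧ x = b then (1:ℤ) else 0)
        = if x = b then (if b ≠ 0 then 1 else 0) else 0 from by
        split_ifs <;> simp_all)]
    rw [Finset.sum_ite_eq' Finset.univ b fun _ => if b ≠ 0 then (1:ℤ) else 0]
    split_ifs <;> simp_all
  have S3 : ∑ x : Fin M, wronOmega a x * wronOmega x b
      = if a ≠ 0 ∧ a = b then 1 else 0 := by
    simp only [wronOmega]
    rw [Finset.sum_congr rfl (fun x _ => show
        ((if a ≠ 0 ∧ a = x then (1:ℤ) else 0) * (if x ≠ 0 ∧ x = b then 1 else 0))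
        = if a = x then (if a ≠ 0 ∧ a = b then 1 else 0) else 0 from by
        split_ifs <;> simp_all)]
    simp [Finset.sum_ite_eq]
  have expand : ∑ x : Fin M, (1 - (M:ℤ) * wronOmega a x) * (1 - (M:ℤ) * wronOmega x b)
      = (M : ℤ) - (M:ℤ) * (∑ x : Fin M, wronOmega a x)
        - (M:ℤ) * (∑ x : Fin M, wronOmega x b)
        + (M:ℤ)^2 * (∑ x : Fin M, wronOmega a x * wronOmega x b) := by
    rw [Finset.mul_sum, Finset.mul_sum, Finset.mul_sum,
      show (M:ℤ) = ∑ _x : Fin M, (1:ℤ) by simp,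
      ← Finset.sum_sub_distrib, ← Finset.sum_sub_distrib, ← Finset.sum_add_distrib]
    exact Finset.sum_congr rfl fun x _ => by ring
  rw [expand, S1, S2, S3]
  simp only [kdel, ne_eq]
  by_cases ha : a = 0 <;> by_cases hb : b = 0 <;> by_cases hab : a = b <;>
    simp_all; ring

theorem Wa_sq_entries {n : ℕ} (m : Fin n → ℕ) [∀ i, NeZero (m i)]
    (g h : ∀ i, Fin (m i)) :
    (Wa m * Wa m) g h = ∏ i, (m i : ℤ) * (kdel (g i) 0 * kdel (h i) 0 +
      (1 - kdel (g i) 0) * (1 - kdel (h i) 0) * ((m i : ℤ) * kdel (g i) (h i) - 1)) := by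
  rw [Matrix.mul_apply]
  simp only [Wa, ← Finset.prod_mul_distrib]
  rw [← Fintype.prod_sum
    (fun i x => (1 - (m i : ℤ) * wronOmega (g i) x) * (1 - (m i : ℤ) * wronOmega x (h i)))]
  exact Finset.prod_congr rfl fun i _ => key (m i) (g i) (h i)
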